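/- If the near-horizon data (F, h_a, h_{ab}) of a degenerate horizon component in a static vacuum black hole with Λ = 0 satisfies the near-horizon equations R_{ab} = ½ h_a h_b − ∇_{(a} h_{b)} and F = ½|h|² − ½∇ₐhᵃ, with F ≤ 0 on the compact closed cross-section H, then F = 0, h_a = 0, and the metric h_{ab} is Ricci flat. -/
import Mathlib


open MeasureTheory

/-- Near-horizon data `(F, h_a, h_{ab})` of a degenerate horizon in a
static vacuum black hole with `Λ = 0`.  The compact closed cross-section `H` is
modeled by a compact topological space with its Riemannian volume measure `μ`.
One-forms on `H` form a real vector space `Ω`, and symmetric 2-tensor fields form a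
real vector space `T`.  For a 1-form `ω`: `sq ω` is the pointwise squared norm
(continuous, nonnegative, and definite: `|ω|² ≡ 0 → ω = 0`), `divg ω` its divergence
(integrating to zero by the divergence theorem), `symProd ω` is `ω_a ω_b`, and
`symGrad ω` is `∇_{(a}ω_{b)}` (both vanish for `ω = 0`).  Given the near-horizon
equations `Ric = ½ h⊗h − ∇_{(a}h_{b)}` and `F = ½|h|² − ½∇_a h^a` with `F ≤ 0`,
conclude `F ≡ 0`, `h = 0`, and `Ric = 0` (the metric `h_{ab}` is Ricci flat). -/
theorem nearHorizon_Lambda_zero_rigidity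
    {H : Type*} [TopologicalSpace H] [CompactSpace H] [Nonempty H]
    [MeasurableSpace H] [BorelSpace H]
    (μ : Measure H) [IsFiniteMeasure μ] [μ.IsOpenPosMeasure]
    {Ω T : Type*} [AddCommGroup Ω] [Module ℝ Ω] [AddCommGroup T] [Module ℝ T]
    (sq : Ω → H → ℝ) (divg : Ω → H → ℝ)
    (symProd : Ω → T) (symGrad : Ω → T)
    (sq_cont : ∀ ω, Continuous (sq ω)) (sq_nonneg : ∀ ω x, 0 ≤ sq ω x)
    (sq_definite : ∀ ω, (∀ x, sq ω x = 0) → ω = 0)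
    (divg_cont : ∀ ω, Continuous (divg ω))
    (divergence_theorem : ∀ ω, ∫ x, divg ω x ∂μ = 0)
    (symProd_zero : symProd 0 = 0) (symGrad_zero : symGrad 0 = 0)
    -- the near-horizon data:
    (h : Ω) (F : H → ℝ) (Ric : T)
    (hF_cont : Continuous F)
    (eq1 : Ric = (1 / 2 : ℝ) • symProd h - symGrad h)
    (eq2 : ∀ x, F x = (1 / 2) * sq h x - (1 / 2) * divg h x)
    (hF_nonpos : ∀ x, F x ≤ 0) :
    (∀ x, F x = 0) ∧ h = 0 ∧ Ric = 0 := by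
  have hint : ∀ g : H → ℝ, Continuous g → Integrable g μ := fun g hg => hg.integrable_of_hasCompactSupport (HasCompactSupport.of_compactSpace g)
  have hFi := hint F hF_cont
  have hsqi := hint (sq h) (sq_cont h)
  have hdi := hint (divg h) (divg_cont h)
  have hIF : ∫ x, F x ∂μ = (1/2) * ∫ x, sq h x ∂μ := by
    have : ∫ x, F x ∂μ = ∫ x, ((1/2) * sq h x - (1/2) * divg h x) ∂μ :=
      integral_congr_ae (Filter.Eventually.of_forall eq2)
    rw [this, integral_sub (hsqi.const_mul _) (hdi.const_mul _),
      integral_const_mul, integral_const_mul, divergence_theorem]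
    ring
  have hIFnonneg : 0 ≤ ∫ x, F x ∂μ := by
    rw [hIF]
    have : 0 ≤ ∫ x, sq h x ∂μ :=
      integral_nonneg (fun x => sq_nonneg h x)
    linarith
  have hIFnonpos : ∫ x, F x ∂μ ≤ 0 := by
    have := integral_nonneg (μ := μ) (f := fun x => -F x)
      (fun x => by simp only [Pi.zero_apply]; linarith [hF_nonpos x])
    rw [integral_neg] at this; linarith
  have hIF0 : ∫ x, F x ∂μ = 0 := le_antisymm hIFnonpos hIFnonneg
  have hnegF : ∫ x, (fun x => -F x) x ∂μ = 0 := by rw [integral_neg, hIF0, neg_zero]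
  have hFae : (fun x => -F x) =ᵐ[μ] 0 :=
    (integral_eq_zero_iff_of_nonneg (fun x => neg_nonneg.mpr (hF_nonpos x))
      hFi.neg).mp hnegF
  have hF0 : ∀ x, F x = 0 := by
    have h2 := (hF_cont.neg.ae_eq_iff_eq μ continuous_const).mp hFae
    intro x
    exact congrFun (neg_eq_zero.mp h2) x
  have hsq0 : ∀ x, sq h x = 0 := by
    have hIsq : ∫ x, sq h x ∂μ = 0 := by
      have := hIF; rw [hIF0] at this; linarith
    have hae : (fun x => sq h x) =ᵐ[μ] 0 :=
      (integral_eq_zero_iff_of_nonneg (fun x => sq_nonneg h x) hsqi).mp hIsq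
    have := ((sq_cont h).ae_eq_iff_eq μ continuous_const).mp hae
    intro x; exact congrFun this x
  have hh0 : h = 0 := sq_definite h hsq0
  refine ⟨hF0, hh0, ?_⟩
  rw [eq1, hh0, symProd_zero, symGrad_zero, smul_zero, sub_zero]
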